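/- Let x : V × {1,…,ℓ} → {0,1} satisfy Σ_{v∈V} x(v,s) = 1 for all s, the destination constraints x(v,ℓ) = 0 for all v ∈ V(D), and the pairwise connectivity constraints x(v0,s) + x(v,s+1) ≤ 1 for all v0 ∈ V, v ∈ V(v0), 1 ≤ s < ℓ. Then x(v,s) = 0 for all v ∈ V(D) and all s ∈ {1,…,ℓ}. -/
import Mathlib


/-- If `x` satisfies the assignment constraints, the destination constraints `x(v,ℓ) = 0`
for all `v ∈ V(D)` (nodes from which `D` is unreachable), and the pairwise connectivity
constraints, then `x(v,s) = 0` for all `v ∈ V(D)` and all `s ∈ {1,…,ℓ}`. -/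
theorem destination_zero_propagates {I : Type*} [DecidableEq I] (L : I → I → Prop) (D : I)
    (V : Finset I) (ℓ : ℕ) (hℓ : 1 ≤ ℓ) (x : I → ℕ → ℤ)
    (hbin : ∀ v ∈ V, ∀ s, x v s = 0 ∨ x v s = 1)
    (hassign : ∀ s, 1 ≤ s → s ≤ ℓ → ∑ v ∈ V, x v s = 1)
    (hdst : ∀ v ∈ V, ¬ Relation.ReflTransGen L v D → x v ℓ = 0)
    (hpair : ∀ v0 ∈ V, ∀ v ∈ V, v ≠ v0 → ¬ Relation.ReflTransGen L v0 v →
      ∀ s, 1 ≤ s → s < ℓ → x v0 s + x v (s + 1) ≤ 1) :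
    ∀ v ∈ V, ¬ Relation.ReflTransGen L v D → ∀ s, 1 ≤ s → s ≤ ℓ → x v s = 0 := by
  intro v hv hreach s hs1 hsl
  have key : ∀ k, ∀ s, 1 ≤ s → s ≤ ℓ → ℓ - s = k →
      ∀ v ∈ V, ¬ Relation.ReflTransGen L v D → x v s = 0 := by
    intro k
    induction k with
    | zero =>
      intro s h1 h2 h3 v hv hr
      have : s = ℓ := by omega
      subst this; exact hdst v hv hr
    | succ n ih =>
      intro s h1 h2 h3 v hv hr
      rcases hbin v hv s with h0 | h1'
      · exact h0
      exfalso
      have hsl : s < ℓ := by omega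
      have hsum := hassign (s+1) (by omega) (by omega)
      have hw : ∃ w ∈ V, x w (s+1) = 1 := by
        by_contra h
        push_neg at h
        have : ∑ u ∈ V, x u (s+1) = 0 := Finset.sum_eq_zero (fun w hwV => by
          rcases hbin w hwV (s+1) with h0 | h1
          · exact h0
          · exact absurd h1 (h w hwV))
        omega
      obtain ⟨w, hwV, hw1⟩ := hw
      have hwr : Relation.ReflTransGen L w D := by
        by_contra hwr
        have := ih (s+1) (by omega) (by omega) (by omega) w hwV hwr
        omega
      have hne : w ≠ v := fun h => hr (h ▸ hwr)
      have hvw : ¬ Relation.ReflTransGen L v w := fun h => hr (h.trans hwr)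
      have := hpair v hv w hwV hne hvw s h1 hsl
      omega
  exact key (ℓ - s) s hs1 hsl rfl v hv hreach
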